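/- Suppose R is a principal ideal domain. Then there exists a basis {u_1,…,u_{n−2},u_{n−1}} of the R-module W such that {u_1,…,u_{n−2}, a_1·u_{n−1}} is a basis of S. Consequently S/S_1 = S/(a_1·W) is isomorphic as an R-module to (R/Ra_1)^{n−2}. -/

import Mathlib

open Submodule

theorem adapted_basis {R : Type*} [CommRing R] [IsDomain R] [IsPrincipalIdealRing R]
    {m : ℕ} (hm : 1 ≤ m) (ψ : (Fin m → R) →ₗ[R] R) :
    ∃ (f : Module.Basis (Fin m) R (Fin m → R)) (g : R),
      Ideal.span {g} = LinearMap.range ψ ∧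
      (∀ i : Fin m, (i : ℕ) < m - 1 → ψ (f i) = 0) ∧
      ψ (f ⟨m - 1, by omega⟩) = g := by
  classical
  obtain ⟨g, hg⟩ : (LinearMap.range ψ).IsPrincipal := inferInstance
  have hg' : Ideal.span {g} = LinearMap.range ψ := by rw [hg]
  by_cases hg0 : g = 0
  · -- ψ = 0
    have hψ0 : ψ = 0 := by
      rw [← LinearMap.range_eq_bot, ← hg', hg0]
      simp
    exact ⟨Pi.basisFun R (Fin m), g, hg', fun i _ => by simp [hψ0], by simp [hψ0, hg0]⟩
  · -- g ≠ 0
    obtain ⟨c0, hc0⟩ : g ∈ LinearMap.range ψ := by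
      rw [← hg']; exact Ideal.subset_span rfl
    obtain ⟨r, k⟩ := Submodule.basisOfPid (Pi.basisFun R (Fin m)) (LinearMap.ker ψ)
    set kE : (Fin r → R) ≃ₗ[R] LinearMap.ker ψ := k.equivFun.symm with hkE
    set Θ : ((Fin r → R) × R) →ₗ[R] (Fin m → R) :=
      ((LinearMap.ker ψ).subtype.comp kE.toLinearMap).coprod
        (LinearMap.toSpanSingleton R _ c0) with hΘ
    have hΘ_apply : ∀ d t, Θ (d, t) = (kE d : Fin m → R) + t • c0 := fun d t => rfl
    have hψΘ : ∀ d t, ψ (Θ (d, t)) = t * g := by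
      intro d t
      rw [hΘ_apply, map_add, map_smul, hc0, (kE d).2, zero_add, smul_eq_mul]
    have hbij : Function.Bijective Θ := by
      constructor
      · intro ⟨d, t⟩ ⟨d', t'⟩ h
        have h2 : t * g = t' * g := by rw [← hψΘ d t, ← hψΘ d' t', h]
        have ht : t = t' := by
          have := mul_right_cancel₀ hg0 h2
          exact this
        have h3 : (kE d : Fin m → R) = (kE d' : Fin m → R) := by
          have := hΘ_apply d t ▸ hΘ_apply d' t' ▸ h
          rw [hΘ_apply, hΘ_apply, ht] at h
          exact add_right_cancel h
        have h4 : kE d = kE d' := Subtype.ext h3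
        have h5 : d = d' := kE.injective h4
        rw [h5, ht]
      · intro x
        have : ψ x ∈ Ideal.span {g} := by rw [hg']; exact ⟨x, rfl⟩
        obtain ⟨e, he⟩ := Ideal.mem_span_singleton'.mp this
        have hker : x - e • c0 ∈ LinearMap.ker ψ := by
          rw [LinearMap.mem_ker, map_sub, map_smul, hc0, smul_eq_mul, he, sub_self]
        refine ⟨(kE.symm ⟨x - e • c0, hker⟩, e), ?_⟩
        rw [hΘ_apply, kE.apply_symm_apply]
        simp
    set E := LinearEquiv.ofBijective Θ hbij with hE
    set bP : Module.Basis ((Fin r) ⊕ Unit) R ((Fin r → R) × R) :=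
      (Pi.basisFun R (Fin r)).prod (Module.Basis.singleton Unit R) with hbP
    set b0 : Module.Basis ((Fin r) ⊕ Unit) R (Fin m → R) := bP.map E with hb0
    -- cardinality
    have hcard : r + 1 = m := by
      have e1 := Module.Basis.indexEquiv b0 (Pi.basisFun R (Fin m))
      have := Fintype.card_congr e1
      simpa using this
    have hψb0 : ∀ s, ψ (b0 s) = Sum.elim (fun _ : Fin r => 0) (fun _ : Unit => g) s := by
      rintro (i | u)
      · have : bP (Sum.inl i) = (Pi.basisFun R (Fin r) i, 0) := by
          ext <;> simp [hbP]
        simp only [hb0, Module.Basis.map_apply, this]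
        rw [show E ((Pi.basisFun R (Fin r)) i, (0:R)) = Θ ((Pi.basisFun R (Fin r)) i, 0) from rfl,
          hψΘ]
        simp
      · have : bP (Sum.inr u) = (0, 1) := by
          ext <;> simp [hbP, Module.Basis.singleton_apply]
        simp only [hb0, Module.Basis.map_apply, this]
        rw [show E ((0 : Fin r → R), (1:R)) = Θ (0, 1) from rfl, hψΘ]
        simp
    -- index equivalence
    set eIdx : ((Fin r) ⊕ Unit) ≃ Fin m :=
      { toFun := Sum.elim (fun i => ⟨i.val, by omega⟩) (fun _ => ⟨m - 1, by omega⟩)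
        invFun := fun j => if h : (j : ℕ) < m - 1 then Sum.inl ⟨j, by omega⟩ else Sum.inr ()
        left_inv := by
          rintro (i | u)
          · simp only [Sum.elim_inl]
            exact dif_pos (by omega)
          · simp only [Sum.elim_inr]
            exact dif_neg (by omega)
        right_inv := by
          intro j
          dsimp only
          by_cases h : (j : ℕ) < m - 1
          · rw [dif_pos h]; rfl
          · rw [dif_neg h]
            simp only [Sum.elim_inr]
            have : (j : ℕ) = m - 1 := by omega
            exact Fin.ext this.symm } with heIdx
    refine ⟨b0.reindex eIdx, g, hg', ?_, ?_⟩
    · intro i hi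
      rw [Module.Basis.reindex_apply]
      have hsymm : eIdx.symm i = Sum.inl ⟨i, by omega⟩ := by
        simp only [heIdx, Equiv.coe_fn_symm_mk]
        rw [dif_pos hi]
      rw [hsymm, hψb0]
      rfl
    · rw [Module.Basis.reindex_apply]
      have hsymm : eIdx.symm ⟨m - 1, by omega⟩ = Sum.inr () := by
        simp only [heIdx, Equiv.coe_fn_symm_mk]
        rw [dif_neg (by omega)]
      rw [hsymm, hψb0]
      rfl
theorem stmt_8 {R : Type*} [CommRing R] [IsDomain R] [IsPrincipalIdealRing R]
    {K : Type*} [Field K] [Algebra R K] [IsFractionRing R K]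
    {m : ℕ} (hm : 1 ≤ m) (a : Fin (m + 1) → R)
    (huni : Ideal.span (Set.range a) = ⊤) (ha1 : a 0 ≠ 0)
    (SF : Submodule R (Fin (m + 1) → K))
    (hSF : ∀ x, x ∈ SF ↔ (∀ i, ∃ r : R, algebraMap R K r = x i) ∧
      ∑ i, algebraMap R K (a i) * x i = 0)
    (w : Fin m → Fin (m + 1) → K)
    (hw : ∀ j k, w j k =
      if k = 0 then -(algebraMap R K (a j.succ)) / algebraMap R K (a 0)
      else if k = j.succ then 1 else 0)
    (W : Submodule R (Fin (m + 1) → K))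
    (hW : W = Submodule.span R (Set.range w))
    (hSW : SF ≤ W) :
    (∃ (u : Module.Basis (Fin m) R W) (b : Module.Basis (Fin m) R SF),
      ∀ i : Fin m, (b i : Fin (m + 1) → K) =
        if (i : ℕ) = m - 1 then a 0 • ((u i : Fin (m + 1) → K))
        else (u i : Fin (m + 1) → K)) ∧
    Nonempty ((SF ⧸ Submodule.comap SF.subtype
        (Submodule.span R (Set.range fun j => a 0 • w j))) ≃ₗ[R]
      (Fin (m - 1) → R ⧸ Ideal.span {a 0})) := by
  classical
  have hα : Function.Injective (algebraMap R K) := IsFractionRing.injective R K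
  have hα0 : algebraMap R K (a 0) ≠ 0 := fun h => ha1 (hα (by rw [h, map_zero]))
  set A : Fin m → R := fun j => a j.succ with hA
  set ψ : (Fin m → R) →ₗ[R] R := Fintype.linearCombination R A with hψdef
  set ι : (Fin m → R) →ₗ[R] (Fin (m + 1) → K) := Fintype.linearCombination R w with hιdef
  have hψ_apply : ∀ c, ψ c = ∑ j, c j * A j := by
    intro c; rw [hψdef, Fintype.linearCombination_apply]; simp [smul_eq_mul]
  have hι_fun : ∀ c, ι c = ∑ j, c j • w j := by
    intro c; rw [hιdef, Fintype.linearCombination_apply]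
  have hι_apply : ∀ c k, ι c k = ∑ j, c j • w j k := by
    intro c k; rw [hι_fun]; simp [Finset.sum_apply]
  have hιsucc : ∀ c (j : Fin m), ι c j.succ = algebraMap R K (c j) := by
    intro c j
    rw [hι_apply]
    rw [Finset.sum_eq_single j]
    · rw [hw, if_neg (Fin.succ_ne_zero j), if_pos rfl, Algebra.smul_def, mul_one]
    · intro j' _ hj'
      rw [hw, if_neg (Fin.succ_ne_zero j),
        if_neg (fun h => hj' (Fin.succ_injective _ h.symm)), smul_zero]
    · intro h; exact absurd (Finset.mem_univ j) h
  have hι0 : ∀ c, algebraMap R K (a 0) * ι c 0 = algebraMap R K (-ψ c) := by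
    intro c
    rw [hι_apply, Finset.mul_sum, hψ_apply, map_neg, map_sum, ← Finset.sum_neg_distrib]
    refine Finset.sum_congr rfl fun j _ => ?_
    rw [hw, if_pos rfl, Algebra.smul_def, map_mul]
    field_simp
    ring
  have hι_inj : Function.Injective ι := by
    intro c c' h
    funext j
    apply hα
    rw [← hιsucc c j, ← hιsucc c' j, h]
  have hrange : LinearMap.range ι = W := by
    rw [hιdef, Fintype.range_linearCombination, hW]
  have hψ_range : LinearMap.range ψ = Ideal.span (Set.range A) := by
    rw [hψdef, Fintype.range_linearCombination]
  -- membership criterion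
  have hmem : ∀ x, x ∈ SF ↔ ∃ c, a 0 ∣ ψ c ∧ ι c = x := by
    intro x
    constructor
    · intro hx
      have hxW : x ∈ LinearMap.range ι := by rw [hrange]; exact hSW hx
      obtain ⟨c, hc⟩ := hxW
      obtain ⟨r0, hr0⟩ := ((hSF x).1 hx).1 0
      refine ⟨c, ⟨-r0, ?_⟩, hc⟩
      apply hα
      have h1 := hι0 c
      rw [hc] at h1
      rw [map_mul, map_neg, hr0]
      rw [← neg_neg (ψ c), map_neg, ← h1]
      ring
    · rintro ⟨c, ⟨r, hr⟩, rfl⟩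
      rw [hSF]
      constructor
      · intro i
        induction i using Fin.cases with
        | zero =>
          refine ⟨-r, ?_⟩
          apply mul_left_cancel₀ hα0
          rw [hι0, hr, ← map_mul]
          congr 1
          ring
        | succ j => exact ⟨c j, (hιsucc c j).symm⟩
      · rw [Fin.sum_univ_succ]
        have h1 : algebraMap R K (a 0) * ι c 0 = algebraMap R K (-ψ c) := hι0 c
        have h2 : ∑ j : Fin m, algebraMap R K (a j.succ) * ι c j.succ
            = algebraMap R K (ψ c) := by
          rw [hψ_apply, map_sum]
          refine Finset.sum_congr rfl fun j _ => ?_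
          rw [hιsucc, ← map_mul, mul_comm]
        rw [h1, h2, ← map_add, neg_add_cancel, map_zero]
  -- adapted basis
  obtain ⟨f, g, hg_span, hf0, hflast⟩ := adapted_basis hm ψ
  set last : Fin m := ⟨m - 1, by omega⟩ with hlast
  have hco : IsCoprime (a 0) g := by
    rw [← Ideal.isCoprime_span_singleton_iff, Ideal.isCoprime_iff_sup_eq, hg_span, hψ_range,
      eq_top_iff, ← huni, Ideal.span_le]
    rintro _ ⟨i, rfl⟩
    induction i using Fin.cases with
    | zero => exact Submodule.mem_sup_left (Ideal.subset_span rfl)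
    | succ j => exact Submodule.mem_sup_right (Ideal.subset_span ⟨j, rfl⟩)
  -- basis u of W
  have hWmem : ∀ c, ι c ∈ W := fun c => hrange ▸ LinearMap.mem_range_self ι c
  set ιW : (Fin m → R) →ₗ[R] W := ι.codRestrict W hWmem with hιW
  have hbijW : Function.Bijective ιW := by
    constructor
    · intro c c' h
      exact hι_inj (congrArg Subtype.val h)
    · intro x
      have hx : (x : Fin (m + 1) → K) ∈ LinearMap.range ι := by rw [hrange]; exact x.2
      obtain ⟨c, hc⟩ := hx
      exact ⟨c, Subtype.ext hc⟩
  set eW : (Fin m → R) ≃ₗ[R] W := LinearEquiv.ofBijective ιW hbijW with heW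
  set u : Module.Basis (Fin m) R W := f.map eW with hu
  have hu_coe : ∀ i, ((u i : W) : Fin (m + 1) → K) = ι (f i) := fun i => rfl
  -- vectors of the basis of SF
  set cvec : Fin m → (Fin m → R) := fun i => if (i : ℕ) = m - 1 then a 0 • f i else f i
    with hcvec
  have hdvd : ∀ i, a 0 ∣ ψ (cvec i) := by
    intro i
    by_cases h : (i : ℕ) = m - 1
    · rw [hcvec]; simp only [if_pos h, map_smul, smul_eq_mul]; exact Dvd.intro _ rfl
    · rw [hcvec]; simp only [if_neg h]
      rw [hf0 i (by omega)]
      exact dvd_zero _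
  set sv : Fin m → SF := fun i => ⟨ι (cvec i), (hmem _).2 ⟨cvec i, hdvd i, rfl⟩⟩ with hsv
  have hsv_coe : ∀ i, ((sv i : SF) : Fin (m + 1) → K) = ι (cvec i) := fun i => rfl
  have hcvec_li : LinearIndependent R cvec := by
    rw [Fintype.linearIndependent_iff]
    intro t ht
    have hf_li := f.linearIndependent
    rw [Fintype.linearIndependent_iff] at hf_li
    set s : Fin m → R := fun i => if (i : ℕ) = m - 1 then a 0 else 1 with hs
    have h2 : ∑ i, (t i * s i) • f i = 0 := by
      rw [← ht]
      refine Finset.sum_congr rfl fun i _ => ?_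
      rw [hcvec, hs]
      by_cases h : (i : ℕ) = m - 1
      · simp only [if_pos h]; rw [smul_smul]
      · simp only [if_neg h]; rw [mul_one]
    intro i
    have h3 := hf_li _ h2 i
    rcases mul_eq_zero.mp h3 with h | h
    · exact h
    · exfalso
      simp only [hs] at h
      split_ifs at h with hh
      · exact ha1 h
      · exact one_ne_zero h
  have hli : LinearIndependent R sv := by
    have h1 : LinearIndependent R (ι ∘ cvec) :=
      hcvec_li.map' ι (LinearMap.ker_eq_bot.mpr hι_inj)
    exact h1.of_comp SF.subtype
  have hsum_coe : ∀ t : Fin m → R,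
      ((∑ i, t i • sv i : SF) : Fin (m + 1) → K) = ι (∑ i, t i • cvec i) := by
    intro t
    rw [Submodule.coe_sum, map_sum]
    refine Finset.sum_congr rfl fun i _ => ?_
    rw [SetLike.val_smul, hsv_coe, map_smul]
  have hsp : ⊤ ≤ Submodule.span R (Set.range sv) := by
    rintro ⟨x, hx⟩ -
    obtain ⟨c, ⟨r, hr⟩, hc⟩ := (hmem x).1 hx
    set d : Fin m → R := f.equivFun c with hd
    have hcd : ∑ i, d i • f i = c := f.sum_equivFun c
    have hψc : ψ c = d last * g := by
      rw [← hcd, map_sum]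
      rw [Finset.sum_eq_single last]
      · rw [map_smul, hflast, smul_eq_mul]
      · intro i _ hi
        rw [map_smul, hf0 i (by
          have : (i : ℕ) ≠ m - 1 := fun h => hi (Fin.ext h)
          omega), smul_zero]
      · intro h; exact absurd (Finset.mem_univ last) h
    have hdvd_last : a 0 ∣ d last := by
      refine hco.dvd_of_dvd_mul_right ?_
      rw [← hψc]; exact ⟨r, hr⟩
    obtain ⟨e, he⟩ := hdvd_last
    set t : Fin m → R := fun i => if (i : ℕ) = m - 1 then e else d i with ht
    have hsum : ∑ i, t i • cvec i = c := by
      rw [← hcd]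
      refine Finset.sum_congr rfl fun i _ => ?_
      rw [ht, hcvec]
      by_cases h : (i : ℕ) = m - 1
      · simp only [if_pos h]
        rw [smul_smul]
        have hil : i = last := Fin.ext h
        rw [hil, he, mul_comm]
      · simp only [if_neg h]
    have hxeq : (⟨x, hx⟩ : SF) = ∑ i, t i • sv i := by
      apply Subtype.ext
      rw [hsum_coe, hsum, hc]
    rw [hxeq]
    exact Submodule.sum_mem _ fun i _ =>
      Submodule.smul_mem _ _ (Submodule.subset_span ⟨i, rfl⟩)
  set b : Module.Basis (Fin m) R SF := Module.Basis.mk hli hsp with hbdef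
  have hb_apply : ∀ i, b i = sv i := fun i => by rw [hbdef, Module.Basis.mk_apply]
  have hb_coe : ∀ i, ((b i : SF) : Fin (m + 1) → K) = ι (cvec i) := by
    intro i; rw [hb_apply, hsv_coe]
  have hrepr : ∀ (t : Fin m → R) (j : Fin m), b.repr (∑ i, t i • b i) j = t j := by
    intro t j
    rw [← Module.Basis.equivFun_symm_apply]
    have : b.repr (b.equivFun.symm t) j = b.equivFun (b.equivFun.symm t) j := by
      rw [Module.Basis.equivFun_apply]
    rw [this, b.equivFun.apply_symm_apply]
  constructor
  · refine ⟨u, b, fun i => ?_⟩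
    rw [hb_coe, hcvec]
    by_cases h : (i : ℕ) = m - 1
    · simp only [if_pos h]
      rw [map_smul, hu_coe]
    · simp only [if_neg h]
      rw [hu_coe]
  · -- the quotient isomorphism
    set S1 : Submodule R SF := Submodule.comap SF.subtype
        (Submodule.span R (Set.range fun j => a 0 • w j)) with hS1def
    have hS1 : ∀ x : SF, x ∈ S1 ↔ ∃ c', (x : Fin (m + 1) → K) = a 0 • ι c' := by
      intro x
      rw [hS1def, Submodule.mem_comap]
      rw [show SF.subtype x = (x : Fin (m + 1) → K) from rfl]
      rw [mem_span_range_iff_exists_fun]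
      constructor
      · rintro ⟨c, hc⟩
        refine ⟨c, ?_⟩
        rw [← hc, hι_fun, Finset.smul_sum]
        exact Finset.sum_congr rfl fun j _ => (smul_comm _ _ _)
      · rintro ⟨c, hc⟩
        refine ⟨c, ?_⟩
        rw [hc, hι_fun, Finset.smul_sum]
        exact Finset.sum_congr rfl fun j _ => (smul_comm _ _ _)
    set emb : Fin (m - 1) → Fin m := fun i => ⟨i.val, by omega⟩ with hemb
    set Φ : SF →ₗ[R] (Fin (m - 1) → R ⧸ Ideal.span {a 0}) :=
      LinearMap.pi (fun i => (Ideal.span {a 0}).mkQ ∘ₗ (b.coord (emb i))) with hΦdef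
    have hΦ_apply : ∀ (x : SF) (i : Fin (m - 1)),
        Φ x i = (Ideal.span {a 0}).mkQ (b.repr x (emb i)) := by
      intro x i
      rw [hΦdef, LinearMap.pi_apply, LinearMap.comp_apply, Module.Basis.coord_apply]
    have hΦsurj : Function.Surjective Φ := by
      intro y
      choose r hr using fun i => Submodule.mkQ_surjective (Ideal.span {a 0} : Ideal R) (y i)
      set t : Fin m → R := fun i => if h : (i : ℕ) < m - 1 then r ⟨i, h⟩ else 0 with htdef
      refine ⟨∑ i, t i • b i, ?_⟩
      funext j
      rw [hΦ_apply, hrepr]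
      have h1 : (emb j : ℕ) < m - 1 := j.2
      rw [htdef]
      simp only [dif_pos h1]
      have h2 : (⟨(emb j : ℕ), h1⟩ : Fin (m - 1)) = j := Fin.ext rfl
      rw [h2, hr]
    have hker : LinearMap.ker Φ = S1 := by
      ext x
      rw [LinearMap.mem_ker]
      constructor
      · intro hΦ0
        have hd : ∀ i : Fin m, (i : ℕ) < m - 1 → a 0 ∣ b.repr x i := by
          intro i hi
          have h1 := congrFun hΦ0 ⟨i, hi⟩
          rw [hΦ_apply] at h1
          have h2 : emb ⟨(i : ℕ), hi⟩ = i := Fin.ext rfl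
          rw [h2] at h1
          rw [Pi.zero_apply, Submodule.mkQ_apply, Submodule.Quotient.mk_eq_zero,
            Ideal.mem_span_singleton] at h1
          exact h1
        set q : Fin m → R := fun i =>
          if h : (i : ℕ) < m - 1 then (hd i h).choose else b.repr x i with hq
        refine (hS1 x).2 ⟨∑ i, q i • f i, ?_⟩
        have key : ∑ i, (b.repr x i) • cvec i = a 0 • ∑ i, q i • f i := by
          rw [Finset.smul_sum]
          refine Finset.sum_congr rfl fun i _ => ?_
          by_cases h : (i : ℕ) < m - 1
          · have hspec := (hd i h).choose_spec
            rw [hcvec, hq]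
            simp only [if_neg (by omega : ¬ (i : ℕ) = m - 1), dif_pos h]
            rw [smul_smul, ← hspec]
          · rw [hcvec, hq]
            simp only [if_pos (by omega : (i : ℕ) = m - 1), dif_neg h]
            rw [smul_comm]
        have hx_repr : (x : Fin (m + 1) → K) = ι (∑ i, (b.repr x i) • cvec i) := by
          conv_lhs => rw [← b.sum_repr x]
          have hbs : (∑ i, b.repr x i • b i : SF) = ∑ i, b.repr x i • sv i :=
            Finset.sum_congr rfl fun i _ => by rw [hb_apply]
          rw [hbs, hsum_coe]
        rw [hx_repr, key, map_smul]
      · intro hxS1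
        obtain ⟨c', hc'⟩ := (hS1 x).1 hxS1
        set d' : Fin m → R := f.equivFun c' with hd'
        have hcd' : ∑ i, d' i • f i = c' := f.sum_equivFun c'
        set t : Fin m → R := fun i => if (i : ℕ) = m - 1 then d' last else a 0 * d' i
          with htdef
        have hsum2 : ∑ i, t i • cvec i = a 0 • c' := by
          rw [← hcd', Finset.smul_sum]
          refine Finset.sum_congr rfl fun i _ => ?_
          rw [htdef, hcvec]
          by_cases h : (i : ℕ) = m - 1
          · simp only [if_pos h]
            have hil : i = last := Fin.ext h
            rw [smul_smul, smul_smul, hil, mul_comm]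
          · simp only [if_neg h]
            rw [smul_smul]
        have hxeq2 : x = ∑ i, t i • b i := by
          apply Subtype.ext
          have : ((∑ i, t i • b i : SF) : Fin (m + 1) → K) = ι (∑ i, t i • cvec i) := by
            rw [show (∑ i, t i • b i : SF) = ∑ i, t i • sv i from
              Finset.sum_congr rfl fun i _ => by rw [hb_apply], hsum_coe]
          rw [this, hsum2, map_smul, hc']
        funext i
        rw [hΦ_apply, hxeq2, hrepr]
        have h1 : ¬ ((emb i : ℕ) = m - 1) := by
          have := i.2
          simp only [hemb]
          omega
        rw [htdef]
        simp only [if_neg h1]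
        rw [Pi.zero_apply, Submodule.mkQ_apply, Submodule.Quotient.mk_eq_zero,
          Ideal.mem_span_singleton]
        exact Dvd.intro _ rfl
    exact ⟨(Submodule.quotEquivOfEq _ _ hker.symm).trans
      (Φ.quotKerEquivOfSurjective hΦsurj)⟩
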